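/- arXiv:1607.05247 — 2 statements merged into one kernel-verified Lean document; each statement's English description precedes it below -/
import Mathlib

section
/- For every ω > 0 and every s < t, the integral ∫_s^t e^{ω(r−t)} (r−s)^{−1/2} dr is at most √8 / √ω. -/
open Real MeasureTheory intervalIntegral Set

private lemma aux_rpow_integrable (s a : ℝ) :
    IntervalIntegrable (fun r => (r - s) ^ (-(1:ℝ)/2)) volume s a := by
  have h := (intervalIntegral.intervalIntegrable_rpow' (a := 0) (b := a - s)
    (r := -(1:ℝ)/2) (by norm_num)).comp_sub_right s
  simpa using h

private lemma aux_rpow_integral (s a : ℝ) (hsa : s ≤ a) :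
    ∫ r in s..a, (r - s) ^ (-(1:ℝ)/2) = 2 * Real.sqrt (a - s) := by
  rw [show (fun r => (r - s) ^ (-(1:ℝ)/2)) = fun r => ((fun x => x ^ (-(1:ℝ)/2)) (r - s)) from rfl]
  rw [intervalIntegral.integral_comp_sub_right (fun x => x ^ (-(1:ℝ)/2)) s]
  rw [integral_rpow (Or.inl (by norm_num))]
  have h1 : (-(1:ℝ)/2 + 1) = 1/2 := by norm_num
  rw [h1, sub_self, Real.sqrt_eq_rpow]
  rw [Real.zero_rpow (by norm_num)]
  ring

private lemma aux_meas (ω s t : ℝ) :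
    Measurable (fun r => Real.exp (ω * (r - t)) * (r - s) ^ (-(1:ℝ)/2)) := by
  apply Measurable.mul
  · exact (Real.measurable_exp).comp (by fun_prop)
  · exact (measurable_id.sub_const s).pow_const _

private lemma aux_int (ω s t a : ℝ) (hω : 0 ≤ ω) (hsa : s ≤ a) (hat : a ≤ t) :
    IntervalIntegrable (fun r => Real.exp (ω * (r - t)) * (r - s) ^ (-(1:ℝ)/2)) volume s a
    ∧ ∫ r in s..a, Real.exp (ω * (r - t)) * (r - s) ^ (-(1:ℝ)/2) ≤ 2 * Real.sqrt (a - s) := by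
  have hbd : ∀ r ∈ Set.Icc s a,
      Real.exp (ω * (r - t)) * (r - s) ^ (-(1:ℝ)/2) ≤ (r - s) ^ (-(1:ℝ)/2) := by
    intro r hr
    have h1 : Real.exp (ω * (r - t)) ≤ 1 := by
      rw [Real.exp_le_one_iff]
      exact mul_nonpos_of_nonneg_of_nonpos hω (by linarith [hr.2])
    have h2 : (0:ℝ) ≤ (r - s) ^ (-(1:ℝ)/2) := Real.rpow_nonneg (by linarith [hr.1]) _
    exact mul_le_of_le_one_left h2 h1
  have hint : IntervalIntegrable (fun r => Real.exp (ω * (r - t)) * (r - s) ^ (-(1:ℝ)/2)) volume s a := by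
    apply (aux_rpow_integrable s a).mono_fun
      ((aux_meas ω s t).aestronglyMeasurable.restrict)
    rw [Set.uIoc_of_le hsa, Filter.EventuallyLE, MeasureTheory.ae_restrict_iff' measurableSet_Ioc]
    filter_upwards with r hr
    have hb := hbd r ⟨le_of_lt hr.1, hr.2⟩
    have h2 : (0:ℝ) ≤ (r - s) ^ (-(1:ℝ)/2) := Real.rpow_nonneg (by linarith [hr.1]) _
    have h3 : (0:ℝ) ≤ Real.exp (ω * (r - t)) * (r - s) ^ (-(1:ℝ)/2) :=
      mul_nonneg (Real.exp_nonneg _) h2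
    rw [Real.norm_eq_abs, Real.norm_eq_abs, abs_of_nonneg h3, abs_of_nonneg h2]
    exact hb
  refine ⟨hint, ?_⟩
  have := intervalIntegral.integral_mono_on hsa hint (aux_rpow_integrable s a) ?_
  · calc _ ≤ _ := this
      _ = 2 * Real.sqrt (a - s) := aux_rpow_integral s a hsa
  · exact hbd

private lemma aux_exp_integral (ω t a b : ℝ) (hω : ω ≠ 0) :
    ∫ r in a..b, Real.exp (ω * (r - t))
      = (Real.exp (ω * (b - t)) - Real.exp (ω * (a - t))) / ω := by
  rw [show (fun r => Real.exp (ω * (r - t))) = fun r => ((fun x => Real.exp (ω * x)) (r - t)) from rfl]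
  rw [intervalIntegral.integral_comp_sub_right (fun x => Real.exp (ω * x)) t]
  rw [intervalIntegral.integral_comp_mul_left Real.exp hω, integral_exp]
  rw [smul_eq_mul]
  ring

theorem stmt2 (ω s t : ℝ) (hω : 0 < ω) (hst : s < t) :
    ∫ r in s..t, Real.exp (ω * (r - t)) * (r - s) ^ (-(1:ℝ)/2)
      ≤ Real.sqrt 8 / Real.sqrt ω := by
  set δ : ℝ := (2 * ω)⁻¹ with hδ
  have hδpos : 0 < δ := by positivity
  have hs2 : (0:ℝ) < Real.sqrt 2 := Real.sqrt_pos.mpr (by norm_num)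
  have hsω : (0:ℝ) < Real.sqrt ω := Real.sqrt_pos.mpr hω
  have hs2sq : Real.sqrt 2 * Real.sqrt 2 = 2 := Real.mul_self_sqrt (by norm_num)
  have hsωsq : Real.sqrt ω * Real.sqrt ω = ω := Real.mul_self_sqrt hω.le
  have h8 : Real.sqrt 8 = 2 * Real.sqrt 2 := by
    rw [show (8:ℝ) = 2^2 * 2 by norm_num, Real.sqrt_mul (by positivity), Real.sqrt_sq (by norm_num)]
  have hsδ : Real.sqrt δ = (Real.sqrt 2 * Real.sqrt ω)⁻¹ := by
    rw [hδ, Real.sqrt_inv, Real.sqrt_mul (by norm_num : (0:ℝ) ≤ 2)]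
  by_cases hcase : t ≤ s + δ
  · -- whole interval is short
    have h := (aux_int ω s t t hω.le hst.le le_rfl).2
    refine h.trans ?_
    have h1 : Real.sqrt (t - s) ≤ Real.sqrt δ := Real.sqrt_le_sqrt (by linarith)
    have h2 : 2 * Real.sqrt δ ≤ Real.sqrt 8 / Real.sqrt ω := by
      rw [hsδ, h8]
      rw [div_eq_mul_inv, mul_inv]
      have : (Real.sqrt 2)⁻¹ ≤ Real.sqrt 2 := by
        rw [inv_le_iff_one_le_mul₀ hs2]
        nlinarith
      calc 2 * ((Real.sqrt 2)⁻¹ * (Real.sqrt ω)⁻¹)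
          ≤ 2 * (Real.sqrt 2 * (Real.sqrt ω)⁻¹) := by
            apply mul_le_mul_of_nonneg_left _ (by norm_num)
            exact mul_le_mul_of_nonneg_right this (by positivity)
        _ = 2 * Real.sqrt 2 * (Real.sqrt ω)⁻¹ := by ring
    linarith
  · push_neg at hcase
    have hmid : s ≤ s + δ := by linarith
    have hmidt : s + δ ≤ t := hcase.le
    obtain ⟨hint1, hbd1⟩ := aux_int ω s t (s + δ) hω.le hmid hmidt
    -- integrability on second piece
    have hcont : ContinuousOn (fun r => Real.exp (ω * (r - t)) * (r - s) ^ (-(1:ℝ)/2))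
        (Set.uIcc (s + δ) t) := by
      rw [Set.uIcc_of_le hmidt]
      intro r hr
      apply ContinuousAt.continuousWithinAt
      apply ContinuousAt.mul
      · exact (Real.continuous_exp.comp (by continuity)).continuousAt
      · exact ContinuousAt.rpow_const (continuousAt_id.sub continuousAt_const)
          (Or.inl (by have := hr.1; intro h; nlinarith))
    have hint2 : IntervalIntegrable (fun r => Real.exp (ω * (r - t)) * (r - s) ^ (-(1:ℝ)/2))
        volume (s + δ) t := hcont.intervalIntegrable
    rw [← intervalIntegral.integral_add_adjacent_intervals hint1 hint2]
    -- bound second integral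
    set C : ℝ := Real.sqrt (2 * ω) with hC
    have hCδ : δ ^ (-(1:ℝ)/2) = C := by
      rw [hδ, show (-(1:ℝ)/2) = -(1/2) by norm_num, Real.rpow_neg (by positivity),
        Real.inv_rpow (by positivity), inv_inv, hC, Real.sqrt_eq_rpow]
    have hintC : IntervalIntegrable (fun r => C * Real.exp (ω * (r - t))) volume (s + δ) t := by
      apply Continuous.intervalIntegrable
      continuity
    have hbd2 : ∫ r in (s+δ)..t, Real.exp (ω * (r - t)) * (r - s) ^ (-(1:ℝ)/2)
        ≤ C / ω := by
      have hmono := intervalIntegral.integral_mono_on hmidt hint2 hintC ?_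
      · refine hmono.trans ?_
        rw [intervalIntegral.integral_const_mul, aux_exp_integral ω t _ _ hω.ne']
        have hCpos : 0 ≤ C := Real.sqrt_nonneg _
        rw [div_eq_mul_inv C ω]
        apply mul_le_mul_of_nonneg_left _ hCpos
        rw [div_le_iff₀ hω]
        have h1 : Real.exp (ω * (t - t)) = 1 := by simp
        have h2 : 0 < Real.exp (ω * (s + δ - t)) := Real.exp_pos _
        rw [h1]
        rw [inv_mul_cancel₀ hω.ne']
        linarith
      · intro r hr
        have hrs : δ ≤ r - s := by linarith [hr.1]
        have h1 : (r - s) ^ (-(1:ℝ)/2) ≤ δ ^ (-(1:ℝ)/2) :=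
          Real.rpow_le_rpow_of_nonpos hδpos hrs (by norm_num)
        rw [mul_comm C _]
        exact mul_le_mul_of_nonneg_left (h1.trans_eq hCδ) (Real.exp_nonneg _)
    have hδs : Real.sqrt (s + δ - s) = Real.sqrt δ := by ring_nf
    -- final arithmetic
    have hCval : C = Real.sqrt 2 * Real.sqrt ω := by
      rw [hC, Real.sqrt_mul (by norm_num : (0:ℝ) ≤ 2)]
    have t1 : 2 * (Real.sqrt 2 * Real.sqrt ω)⁻¹ = Real.sqrt 2 / Real.sqrt ω := by
      rw [eq_div_iff hsω.ne']
      field_simp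
      linear_combination (-1 : ℝ) * Real.sq_sqrt (by norm_num : (0:ℝ) ≤ 2)
    have t2 : Real.sqrt 2 * Real.sqrt ω / ω = Real.sqrt 2 / Real.sqrt ω := by
      rw [div_eq_div_iff hω.ne' hsω.ne']
      linear_combination Real.sqrt 2 * hsωsq
    have hfinal : 2 * Real.sqrt δ + C / ω = Real.sqrt 8 / Real.sqrt ω := by
      rw [hsδ, hCval, h8, t1, t2]
      ring
    calc (∫ r in s..(s+δ), Real.exp (ω * (r - t)) * (r - s) ^ (-(1:ℝ)/2))
          + ∫ r in (s+δ)..t, Real.exp (ω * (r - t)) * (r - s) ^ (-(1:ℝ)/2)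
        ≤ 2 * Real.sqrt δ + C / ω := by
          have := hbd1
          rw [hδs] at this
          linarith
      _ = Real.sqrt 8 / Real.sqrt ω := hfinal
end

section
/- Let β ∈ [0,1), δ > 0, C > 0 and let h : (s, s+δ] → [0, ∞) be measurable, with h(t) ≤ M (t−s)^{−1/2} for some M > 0 and all t, and satisfying h(t) ≤ C ∫_s^t (r−s)^{−β} h(r) dr for all t ∈ (s, s+δ]. Then h(t) = 0 for all t ∈ (s, s+δ]. -/
open MeasureTheory Set intervalIntegral

namespace Stmt17Aux

lemma ker_intble (s β : ℝ) (hβ1 : β < 1) (t : ℝ) :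
    IntervalIntegrable (fun r => (r - s) ^ (-β)) volume s t := by
  have h1 : IntervalIntegrable (fun x : ℝ => x ^ (-β)) volume (s - s) (t - s) :=
    intervalIntegrable_rpow' (by linarith)
  simpa using h1.comp_sub_right s

lemma ker_integral (s β : ℝ) (hβ1 : β < 1) (t : ℝ) (hst : s ≤ t) :
    ∫ r in Ioc s t, (r - s) ^ (-β) = (t - s) ^ (1 - β) / (1 - β) := by
  rw [← integral_of_le hst,
    integral_comp_sub_right (fun x => x ^ (-β)) s,
    integral_rpow (Or.inl (by linarith)), sub_self,
    Real.zero_rpow (by linarith : (-β) + 1 ≠ 0), sub_zero, neg_add_eq_sub]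

lemma stepA (s δ β C : ℝ) (hβ0 : 0 ≤ β) (hβ1 : β < 1) (hC : 0 < C)
    (h : ℝ → ℝ)
    (hnn : ∀ t ∈ Set.Ioc s (s + δ), 0 ≤ h t)
    (hint : ∀ t ∈ Set.Ioc s (s + δ), h t ≤ C * ∫ r in s..t, (r - s) ^ (-β) * h r)
    (t : ℝ) (ht : t ∈ Set.Ioc s (s + δ))
    (hsmall : C * (t - s) ^ (1 - β) / (1 - β) ≤ 1 / 2) :
    h t = 0 := by
  obtain ⟨hst, htδ⟩ := ht
  have fnn : ∀ r ∈ Ioc s (s + δ), 0 ≤ (r - s) ^ (-β) * h r := fun r hr =>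
    mul_nonneg (Real.rpow_nonneg (by linarith [hr.1] : (0:ℝ) ≤ r - s) _) (hnn r hr)
  have hintIoc : ∀ r, s < r → r ≤ s + δ →
      h r ≤ C * ∫ x in Ioc s r, (x - s) ^ (-β) * h x := by
    intro r h1 h2
    have := hint r ⟨h1, h2⟩
    rwa [integral_of_le h1.le] at this
  by_cases hi : IntegrableOn (fun r => (r - s) ^ (-β) * h r) (Ioc s t)
  · have Hnn : 0 ≤ ∫ x in Ioc s t, (x - s) ^ (-β) * h x :=
      setIntegral_nonneg measurableSet_Ioc (fun r hr => fnn r ⟨hr.1, hr.2.trans htδ⟩)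
    have Hmono : ∀ r ∈ Ioc s t,
        (∫ x in Ioc s r, (x - s) ^ (-β) * h x) ≤ ∫ x in Ioc s t, (x - s) ^ (-β) * h x := by
      intro r hr
      refine setIntegral_mono_set hi ?_ ?_
      · exact (ae_restrict_iff' measurableSet_Ioc).2
          (ae_of_all _ (fun x hx => fnn x ⟨hx.1, hx.2.trans htδ⟩))
      · exact HasSubset.Subset.eventuallyLE (Ioc_subset_Ioc_right hr.2)
    have hb : ∀ r ∈ Ioc s t, (r - s) ^ (-β) * h r ≤
        C * (∫ x in Ioc s t, (x - s) ^ (-β) * h x) * (r - s) ^ (-β) := by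
      intro r hr
      have h1 : h r ≤ C * ∫ x in Ioc s r, (x - s) ^ (-β) * h x :=
        hintIoc r hr.1 (hr.2.trans htδ)
      have h2 := Hmono r hr
      have h3 : (0:ℝ) ≤ (r - s) ^ (-β) := Real.rpow_nonneg (by linarith [hr.1]) _
      have h4 : h r ≤ C * ∫ x in Ioc s t, (x - s) ^ (-β) * h x := by nlinarith
      nlinarith [mul_le_mul_of_nonneg_left h4 h3]
    have hgint : IntegrableOn
        (fun r => C * (∫ x in Ioc s t, (x - s) ^ (-β) * h x) * (r - s) ^ (-β)) (Ioc s t) :=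
      ((ker_intble s β hβ1 t).1.const_mul _)
    have key : (∫ x in Ioc s t, (x - s) ^ (-β) * h x) ≤
        C * (∫ x in Ioc s t, (x - s) ^ (-β) * h x) * ((t - s) ^ (1 - β) / (1 - β)) := by
      calc (∫ x in Ioc s t, (x - s) ^ (-β) * h x)
          ≤ ∫ r in Ioc s t, C * (∫ x in Ioc s t, (x - s) ^ (-β) * h x) * (r - s) ^ (-β) :=
            setIntegral_mono_on hi hgint measurableSet_Ioc hb
        _ = C * (∫ x in Ioc s t, (x - s) ^ (-β) * h x) * ∫ r in Ioc s t, (r - s) ^ (-β) :=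
            MeasureTheory.integral_const_mul _ _
        _ = _ := by rw [ker_integral s β hβ1 t hst.le]
    have key2 : (∫ x in Ioc s t, (x - s) ^ (-β) * h x) ≤
        (C * (t - s) ^ (1 - β) / (1 - β)) * ∫ x in Ioc s t, (x - s) ^ (-β) * h x := by
      calc (∫ x in Ioc s t, (x - s) ^ (-β) * h x)
          ≤ C * (∫ x in Ioc s t, (x - s) ^ (-β) * h x) * ((t - s) ^ (1 - β) / (1 - β)) := key
        _ = (C * (t - s) ^ (1 - β) / (1 - β)) * ∫ x in Ioc s t, (x - s) ^ (-β) * h x := by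
            ring
    have h12 := mul_le_mul_of_nonneg_right hsmall Hnn
    have hH0 : (∫ x in Ioc s t, (x - s) ^ (-β) * h x) = 0 := le_antisymm (by linarith) Hnn
    have hfin := hintIoc t hst htδ
    rw [hH0, mul_zero] at hfin
    exact le_antisymm hfin (hnn t ⟨hst, htδ⟩)
  · have h0 : (∫ x in Ioc s t, (x - s) ^ (-β) * h x) = 0 := integral_undef hi
    have hfin := hintIoc t hst htδ
    rw [h0, mul_zero] at hfin
    exact le_antisymm hfin (hnn t ⟨hst, htδ⟩)


lemma stepB (s δ β C M : ℝ) (hβ0 : 0 ≤ β) (hβ1 : β < 1) (hC : 0 < C) (hM : 0 < M)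
    (h : ℝ → ℝ) (hmeas : Measurable h)
    (hnn : ∀ t ∈ Set.Ioc s (s + δ), 0 ≤ h t)
    (hbd : ∀ t ∈ Set.Ioc s (s + δ), h t ≤ M * (t - s) ^ (-(1:ℝ)/2))
    (hint : ∀ t ∈ Set.Ioc s (s + δ), h t ≤ C * ∫ r in s..t, (r - s) ^ (-β) * h r)
    (τ : ℝ) (hτ : τ ∈ Set.Ioo s (s + δ)) (hzero : ∀ r ∈ Set.Ioc s τ, h r = 0) :
    ∀ t ∈ Set.Ioc τ (min (τ + (τ - s) ^ β / (2 * C)) (s + δ)), h t = 0 := by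
  obtain ⟨hsτ, hτδ⟩ := hτ
  have hτs : (0:ℝ) < τ - s := by linarith
  set ε : ℝ := (τ - s) ^ β / (2 * C) with hε
  have hεpos : 0 < ε := div_pos (Real.rpow_pos_of_pos hτs β) (by linarith)
  set t₂ : ℝ := min (τ + ε) (s + δ) with ht₂
  have hτt₂ : τ < t₂ := lt_min (by linarith) hτδ
  have hsub : ∀ r ∈ Ioc τ t₂, r ∈ Ioc s (s + δ) := fun r hr =>
    ⟨hsτ.trans hr.1, hr.2.trans (min_le_right _ _)⟩
  set K : ℝ := (τ - s) ^ (-β) with hK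
  have Knn : (0:ℝ) ≤ K := Real.rpow_nonneg hτs.le _
  set B : ℝ := M * (τ - s) ^ (-(1:ℝ)/2) with hB
  have hBb : ∀ r ∈ Ioc τ t₂, h r ≤ B := by
    intro r hr
    refine (hbd r (hsub r hr)).trans ?_
    exact mul_le_mul_of_nonneg_left
      (Real.rpow_le_rpow_of_nonpos hτs (by linarith [hr.1]) (by norm_num)) hM.le
  have hKb : ∀ r, τ < r → (r - s) ^ (-β) ≤ K :=
    fun r hr => Real.rpow_le_rpow_of_nonpos hτs (by linarith) (neg_nonpos.2 hβ0)
  have bdd : BddAbove (h '' Ioc τ t₂) := by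
    refine ⟨B, ?_⟩
    rintro _ ⟨r, hr, rfl⟩
    exact hBb r hr
  have hne : (h '' Ioc τ t₂).Nonempty := ⟨h t₂, ⟨t₂, ⟨hτt₂, le_rfl⟩, rfl⟩⟩
  set S : ℝ := sSup (h '' Ioc τ t₂) with hSdef
  have hS : ∀ r ∈ Ioc τ t₂, h r ≤ S := fun r hr => le_csSup bdd ⟨r, hr, rfl⟩
  have Snn : 0 ≤ S :=
    (hnn t₂ (hsub t₂ ⟨hτt₂, le_rfl⟩)).trans (hS t₂ ⟨hτt₂, le_rfl⟩)
  have fmeas : Measurable fun r => (r - s) ^ (-β) * h r := by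
    have h1 : Measurable fun x : ℝ => x ^ (-β) :=
      measurable_of_continuousOn_compl_singleton (0 : ℝ)
        (continuousOn_of_forall_continuousAt fun x hx =>
          Real.continuousAt_rpow_const x (-β) (Or.inl hx))
    exact (h1.comp (measurable_id.sub_const s)).mul hmeas
  have key : ∀ t ∈ Ioc τ t₂, h t ≤ C * (K * S) * (t - τ) := by
    intro t ht
    obtain ⟨hτt, htt₂⟩ := ht
    have hstt : s < t := hsτ.trans hτt
    have htδ' : t ≤ s + δ := htt₂.trans (min_le_right _ _)
    have hzeroOn : EqOn (fun r => (r - s) ^ (-β) * h r) (fun _ => (0:ℝ)) (Ioc s τ) := by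
      intro r hr
      simp only []
      rw [hzero r hr, mul_zero]
    have I1 : IntegrableOn (fun r => (r - s) ^ (-β) * h r) (Ioc s τ) :=
      (integrableOn_congr_fun hzeroOn measurableSet_Ioc).2 (integrableOn_zero)
    have I2 : IntegrableOn (fun r => (r - s) ^ (-β) * h r) (Ioc τ t) := by
      refine Measure.integrableOn_of_bounded (M := K * B) measure_Ioc_lt_top.ne
        fmeas.aestronglyMeasurable ?_
      refine (ae_restrict_iff' measurableSet_Ioc).2 (ae_of_all _ ?_)
      intro r hr
      have hr2 : r ∈ Ioc τ t₂ := ⟨hr.1, hr.2.trans htt₂⟩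
      have hmem := hsub r hr2
      rw [Real.norm_eq_abs, abs_of_nonneg
        (mul_nonneg (Real.rpow_nonneg (by linarith [hmem.1]) _) (hnn r hmem))]
      exact mul_le_mul (hKb r hr.1) (hBb r hr2) (hnn r hmem) Knn
    have hsplit : (∫ x in Ioc s t, (x - s) ^ (-β) * h x) =
        (∫ x in Ioc s τ, (x - s) ^ (-β) * h x) + ∫ x in Ioc τ t, (x - s) ^ (-β) * h x := by
      rw [← Ioc_union_Ioc_eq_Ioc hsτ.le hτt.le]
      exact setIntegral_union (Set.Ioc_disjoint_Ioc_of_le le_rfl) measurableSet_Ioc I1 I2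
    have hfirst : (∫ x in Ioc s τ, (x - s) ^ (-β) * h x) = 0 := by
      rw [setIntegral_congr_fun measurableSet_Ioc hzeroOn]
      simp
    have hmono : (∫ x in Ioc τ t, (x - s) ^ (-β) * h x) ≤ ∫ _ in Ioc τ t, K * S := by
      refine setIntegral_mono_on I2 (integrableOn_const measure_Ioc_lt_top.ne)
        measurableSet_Ioc ?_
      intro r hr
      have hr2 : r ∈ Ioc τ t₂ := ⟨hr.1, hr.2.trans htt₂⟩
      exact mul_le_mul (hKb r hr.1) (hS r hr2) (hnn r (hsub r hr2)) Knn
    have hconst : (∫ _ in Ioc τ t, K * S) = K * S * (t - τ) := by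
      rw [setIntegral_const, measureReal_def, Real.volume_Ioc, ENNReal.toReal_ofReal (by linarith), smul_eq_mul]
      ring
    have h1 := hint t ⟨hstt, htδ'⟩
    rw [integral_of_le hstt.le] at h1
    calc h t ≤ C * ∫ x in Ioc s t, (x - s) ^ (-β) * h x := h1
      _ ≤ C * (K * S * (t - τ)) := by
          refine mul_le_mul_of_nonneg_left ?_ hC.le
          rw [hsplit, hfirst, zero_add]
          exact hmono.trans_eq hconst
      _ = C * (K * S) * (t - τ) := by ring
  have hKε : C * K * ε = 1 / 2 := by
    rw [hε, hK]
    have : (τ - s) ^ (-β) * (τ - s) ^ β = 1 := by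
      rw [← Real.rpow_add hτs, neg_add_cancel, Real.rpow_zero]
    field_simp
    nlinarith [this]
  have Shalf : S ≤ 1 / 2 * S := by
    refine csSup_le hne ?_
    rintro _ ⟨r, hr, rfl⟩
    have h1 := key r hr
    have h2 : r - τ ≤ ε := by
      have := hr.2
      have := min_le_left (τ + ε) (s + δ)
      linarith [hr.2.trans (min_le_left (τ + ε) (s + δ))]
    calc h r ≤ C * (K * S) * (r - τ) := h1
      _ ≤ C * (K * S) * ε := by
          refine mul_le_mul_of_nonneg_left h2 ?_
          positivity
      _ = (C * K * ε) * S := by ring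
      _ = 1 / 2 * S := by rw [hKε]
  have hS0 : S = 0 := le_antisymm (by linarith) Snn
  intro t ht
  exact le_antisymm ((hS t ht).trans_eq hS0) (hnn t (hsub t ht))


end Stmt17Aux

theorem stmt17 (s δ β C M : ℝ) (hδ : 0 < δ) (hβ0 : 0 ≤ β) (hβ1 : β < 1)
    (hC : 0 < C) (hM : 0 < M) (h : ℝ → ℝ) (hmeas : Measurable h)
    (hnn : ∀ t ∈ Set.Ioc s (s + δ), 0 ≤ h t)
    (hbd : ∀ t ∈ Set.Ioc s (s + δ), h t ≤ M * (t - s) ^ (-(1:ℝ)/2))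
    (hint : ∀ t ∈ Set.Ioc s (s + δ), h t ≤ C * ∫ r in s..t, (r - s) ^ (-β) * h r) :
    ∀ t ∈ Set.Ioc s (s + δ), h t = 0 := by
  classical
  have h1β : (0:ℝ) < 1 - β := by linarith
  set ε₀ : ℝ := ((1 - β) / (2 * C)) ^ (1 - β)⁻¹ with hε₀
  have hε₀pos : 0 < ε₀ := Real.rpow_pos_of_pos (div_pos h1β (by linarith)) _
  have hε₀pow : ε₀ ^ (1 - β) = (1 - β) / (2 * C) :=
    Real.rpow_inv_rpow (le_of_lt (div_pos h1β (by linarith))) (by linarith)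
  have hsmall : ∀ t, s < t → t - s ≤ ε₀ → C * (t - s) ^ (1 - β) / (1 - β) ≤ 1 / 2 := by
    intro t hst hts
    have hle : (t - s) ^ (1 - β) ≤ ε₀ ^ (1 - β) :=
      Real.rpow_le_rpow (by linarith) hts (by linarith)
    have : C * (t - s) ^ (1 - β) / (1 - β) ≤ C * ε₀ ^ (1 - β) / (1 - β) := by gcongr
    refine this.trans ?_
    rw [hε₀pow]
    have heq : C * ((1 - β) / (2 * C)) / (1 - β) = 1 / 2 := by
      field_simp
    exact heq.le
  set Z : Set ℝ := {τ | τ ∈ Set.Icc s (s + δ) ∧ ∀ r ∈ Set.Ioc s τ, h r = 0} with hZ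
  have hsZ : s ∈ Z := ⟨⟨le_refl s, by linarith⟩, fun r hr => absurd hr.2 (not_le.2 hr.1)⟩
  have hne : Z.Nonempty := ⟨s, hsZ⟩
  have hbdd : BddAbove Z := ⟨s + δ, fun τ hτ => hτ.1.2⟩
  set T : ℝ := sSup Z with hT
  have hTδ : T ≤ s + δ := csSup_le hne fun τ hτ => hτ.1.2
  have hτ₀Z : min (s + ε₀) (s + δ) ∈ Z := by
    constructor
    · exact ⟨le_min (by linarith) (by linarith), min_le_right _ _⟩
    · intro r hr
      refine Stmt17Aux.stepA s δ β C hβ0 hβ1 hC h hnn hint r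
        ⟨hr.1, hr.2.trans (min_le_right _ _)⟩ (hsmall r hr.1 ?_)
      have := hr.2.trans (min_le_left _ _)
      linarith
  have hsT : s < T :=
    lt_of_lt_of_le (lt_min (by linarith) (by linarith)) (le_csSup hbdd hτ₀Z)
  have hIoo : ∀ r, s < r → r < T → h r = 0 := by
    intro r h1 h2
    obtain ⟨τ, hτZ, hrτ⟩ := exists_lt_of_lt_csSup hne h2
    exact hτZ.2 r ⟨h1, hrτ.le⟩
  have hzT : h T = 0 := by
    have h1 := hint T ⟨hsT, hTδ⟩
    have h2 : (∫ r in s..T, (r - s) ^ (-β) * h r) = 0 := by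
      rw [intervalIntegral.integral_of_le hsT.le,
        show volume.restrict (Set.Ioc s T) = volume.restrict (Set.Ioo s T) from
          (Measure.restrict_congr_set Ioo_ae_eq_Ioc).symm]
      have heq : Set.EqOn (fun r => (r - s) ^ (-β) * h r) (fun _ => (0:ℝ)) (Set.Ioo s T) := by
        intro r hr
        simp only []
        rw [hIoo r hr.1 hr.2, mul_zero]
      rw [MeasureTheory.setIntegral_congr_fun measurableSet_Ioo heq]
      simp
    rw [h2, mul_zero] at h1
    exact le_antisymm h1 (hnn T ⟨hsT, hTδ⟩)
  have hzeroT : ∀ r ∈ Set.Ioc s T, h r = 0 := by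
    intro r hr
    rcases eq_or_lt_of_le hr.2 with h' | h'
    · rw [h']; exact hzT
    · exact hIoo r hr.1 h'
  have hTeq : T = s + δ := by
    by_contra hne'
    have hTlt : T < s + δ := lt_of_le_of_ne hTδ hne'
    have hB := Stmt17Aux.stepB s δ β C M hβ0 hβ1 hC hM h hmeas hnn hbd hint T
      ⟨hsT, hTlt⟩ hzeroT
    set t₂ : ℝ := min (T + (T - s) ^ β / (2 * C)) (s + δ) with ht₂
    have hεpos : 0 < (T - s) ^ β / (2 * C) :=
      div_pos (Real.rpow_pos_of_pos (by linarith) β) (by linarith)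
    have hTt₂ : T < t₂ := lt_min (by linarith) hTlt
    have ht₂Z : t₂ ∈ Z := by
      constructor
      · exact ⟨by linarith [hsT.le], min_le_right _ _⟩
      · intro r hr
        rcases le_or_gt r T with h' | h'
        · exact hzeroT r ⟨hr.1, h'⟩
        · exact hB r ⟨h', hr.2⟩
    exact absurd (le_csSup hbdd ht₂Z) (not_le.2 hTt₂)
  intro t ht
  exact hzeroT t ⟨ht.1, ht.2.trans_eq hTeq.symm⟩
end
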